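/- Let P : [0,T] → ℝ^{n×n} be a continuously differentiable positive-definite matrix function solving Ṗ = A(t)P + P A(t)ᵀ + B(t)B(t)ᵀ. Define F(t) = P(t)^{-1/2} A(t) P(t)^{1/2} + R(t) and G(t) = P(t)^{-1/2} B(t), where R(t) = (d/dt P(t)^{-1/2}) P(t)^{1/2}. Then F(t) + F(t)ᵀ + G(t)G(t)ᵀ = 0 for all t. -/

import Mathlib

open Matrix

theorem stmt_17 {n p : ℕ}
    (A : ℝ → Matrix (Fin n) (Fin n) ℝ) (B : ℝ → Matrix (Fin n) (Fin p) ℝ)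
    (P S : ℝ → Matrix (Fin n) (Fin n) ℝ)
    (hSpos : ∀ t, (S t).PosDef)
    (hSsq : ∀ t, S t * S t = P t)
    -- P solves the Lyapunov differential equation Ṗ = A P + P Aᵀ + B Bᵀ (entrywise):
    (hP : ∀ t i j, HasDerivAt (fun τ => P τ i j)
      ((A t * P t + P t * (A t)ᵀ + B t * (B t)ᵀ) i j) t)
    -- S' is the derivative of t ↦ P(t)^{-1/2} = (S t)⁻¹ (entrywise):
    (S' : ℝ → Matrix (Fin n) (Fin n) ℝ)
    (hS' : ∀ t i j, HasDerivAt (fun τ => (S τ)⁻¹ i j) (S' t i j) t)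
    (R F : ℝ → Matrix (Fin n) (Fin n) ℝ) (G : ℝ → Matrix (Fin n) (Fin p) ℝ)
    (hR : ∀ t, R t = S' t * S t)
    (hF : ∀ t, F t = (S t)⁻¹ * A t * S t + R t)
    (hG : ∀ t, G t = (S t)⁻¹ * B t) :
    ∀ t, F t + (F t)ᵀ + G t * (G t)ᵀ = 0 := by
  intro t
  -- basic facts
  have hdet : ∀ τ, IsUnit (S τ).det := fun τ => isUnit_iff_ne_zero.2 (hSpos τ).det_pos.ne'
  have hQS : ∀ τ, (S τ)⁻¹ * S τ = 1 := fun τ => Matrix.nonsing_inv_mul _ (hdet τ)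
  have hSQ : ∀ τ, S τ * (S τ)⁻¹ = 1 := fun τ => Matrix.mul_nonsing_inv _ (hdet τ)
  have hsym : ∀ τ, (S τ)ᵀ = S τ := by
    intro τ
    have := (hSpos τ).isHermitian
    simpa [Matrix.IsHermitian, Matrix.conjTranspose_eq_transpose_of_trivial] using this
  have hQsym : ∀ τ, ((S τ)⁻¹)ᵀ = (S τ)⁻¹ := by
    intro τ
    rw [Matrix.transpose_nonsing_inv, hsym]
  have hS'sym : (S' t)ᵀ = S' t := by
    ext i j
    have h1 : HasDerivAt (fun τ => (S τ)⁻¹ i j) (S' t j i) t := by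
      have := hS' t j i
      convert this using 1
      funext τ
      have := congrFun (congrFun (hQsym τ) i) j
      simpa [Matrix.transpose_apply] using this.symm
    exact (HasDerivAt.unique h1 (hS' t i j)).symm ▸ rfl
  set P' : Matrix (Fin n) (Fin n) ℝ := A t * P t + P t * (A t)ᵀ + B t * (B t)ᵀ with hP'
  -- derivative of Q * P
  have h1 : ∀ i l, HasDerivAt (fun τ => ((S τ)⁻¹ * P τ) i l)
      ((S' t * P t + (S t)⁻¹ * P') i l) t := by
    intro i l
    have : HasDerivAt (fun τ => ∑ k, (S τ)⁻¹ i k * P τ k l)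
        (∑ k, (S' t i k * P t k l + (S t)⁻¹ i k * P' k l)) t :=
      HasDerivAt.fun_sum fun k _ => (hS' t i k).mul (hP t k l)
    simpa [Matrix.mul_apply, Matrix.add_apply, Finset.sum_add_distrib] using this
  -- derivative of Q * P * Q
  have h2 : ∀ i j, HasDerivAt (fun τ => ((S τ)⁻¹ * P τ * (S τ)⁻¹) i j)
      (((S' t * P t + (S t)⁻¹ * P') * (S t)⁻¹ + (S t)⁻¹ * P t * S' t) i j) t := by
    intro i j
    have h : HasDerivAt (fun τ => ∑ l, ((S τ)⁻¹ * P τ) i l * (S τ)⁻¹ l j)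
        (∑ l, ((S' t * P t + (S t)⁻¹ * P') i l * (S t)⁻¹ l j
            + ((S t)⁻¹ * P t) i l * S' t l j)) t :=
      HasDerivAt.fun_sum fun l _ => (h1 i l).mul (hS' t l j)
    have efun : (fun τ => ((S τ)⁻¹ * P τ * (S τ)⁻¹) i j)
        = fun τ => ∑ l, ((S τ)⁻¹ * P τ) i l * (S τ)⁻¹ l j := by
      funext τ; rw [Matrix.mul_apply]
    have e : (((S' t * P t + (S t)⁻¹ * P') * (S t)⁻¹ + (S t)⁻¹ * P t * S' t) i j)
        = ∑ l, ((S' t * P t + (S t)⁻¹ * P') i l * (S t)⁻¹ l j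
            + ((S t)⁻¹ * P t) i l * S' t l j) := by
      rw [Matrix.add_apply, Matrix.mul_apply, Matrix.mul_apply, ← Finset.sum_add_distrib]
    rw [efun, e]; exact h
  -- Q * P * Q is constant = 1
  have hconst : (fun τ => (S τ)⁻¹ * P τ * (S τ)⁻¹) = fun _ => (1 : Matrix (Fin n) (Fin n) ℝ) := by
    funext τ
    rw [← hSsq τ, ← Matrix.mul_assoc, hQS, Matrix.one_mul, hSQ]
  have hzero : (S' t * P t + (S t)⁻¹ * P') * (S t)⁻¹ + (S t)⁻¹ * P t * S' t = 0 := by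
    ext i j
    have hc : HasDerivAt (fun τ => ((S τ)⁻¹ * P τ * (S τ)⁻¹) i j) 0 t := by
      have : (fun τ => ((S τ)⁻¹ * P τ * (S τ)⁻¹) i j)
          = fun _ => (1 : Matrix (Fin n) (Fin n) ℝ) i j := by
        funext τ; rw [congrFun hconst τ]
      rw [this]; exact hasDerivAt_const _ _
    have := HasDerivAt.unique (h2 i j) hc
    simpa using this
  -- simplify hzero using P = S * S
  have hzero' : S' t * S t + (S t)⁻¹ * A t * S t + S t * (A t)ᵀ * (S t)⁻¹ +
      (S t)⁻¹ * (B t * (B t)ᵀ) * (S t)⁻¹ + S t * S' t = 0 := by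
    have e1 : S' t * P t * (S t)⁻¹ = S' t * S t := by
      rw [← hSsq t, Matrix.mul_assoc, Matrix.mul_assoc, hSQ, Matrix.mul_one]
    have e2 : (S t)⁻¹ * P t * S' t = S t * S' t := by
      rw [← hSsq t, ← Matrix.mul_assoc, hQS, Matrix.one_mul]
    have e3 : (S t)⁻¹ * P' * (S t)⁻¹ = (S t)⁻¹ * A t * S t + S t * (A t)ᵀ * (S t)⁻¹ +
        (S t)⁻¹ * (B t * (B t)ᵀ) * (S t)⁻¹ := by
      rw [hP', ← hSsq t]
      have eA : (S t)⁻¹ * (A t * (S t * S t)) * (S t)⁻¹ = (S t)⁻¹ * A t * S t := by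
        rw [show A t * (S t * S t) = A t * S t * S t by rw [Matrix.mul_assoc],
          ← Matrix.mul_assoc, Matrix.mul_assoc _ (S t) (S t)⁻¹, hSQ, Matrix.mul_one,
          ← Matrix.mul_assoc]
      have eB : (S t)⁻¹ * (S t * S t * (A t)ᵀ) * (S t)⁻¹ = S t * (A t)ᵀ * (S t)⁻¹ := by
        rw [← Matrix.mul_assoc, ← Matrix.mul_assoc, hQS, Matrix.one_mul]
      calc (S t)⁻¹ * (A t * (S t * S t) + S t * S t * (A t)ᵀ + B t * (B t)ᵀ) * (S t)⁻¹
          = (S t)⁻¹ * (A t * (S t * S t)) * (S t)⁻¹ + (S t)⁻¹ * (S t * S t * (A t)ᵀ) * (S t)⁻¹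
            + (S t)⁻¹ * (B t * (B t)ᵀ) * (S t)⁻¹ := by
            rw [Matrix.mul_add, Matrix.mul_add, Matrix.add_mul, Matrix.add_mul]
        _ = _ := by rw [eA, eB]
    calc S' t * S t + (S t)⁻¹ * A t * S t + S t * (A t)ᵀ * (S t)⁻¹ +
        (S t)⁻¹ * (B t * (B t)ᵀ) * (S t)⁻¹ + S t * S' t
        = (S' t * P t + (S t)⁻¹ * P') * (S t)⁻¹ + (S t)⁻¹ * P t * S' t := by
          rw [Matrix.add_mul, e1, e3, e2]; abel
      _ = 0 := hzero
  -- final algebra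
  rw [hF, hG, hR]
  simp only [Matrix.transpose_add, Matrix.transpose_mul, hsym, hQsym, hS'sym]
  simp only [Matrix.mul_assoc] at hzero' ⊢
  abel_nf at hzero' ⊢
  exact hzero'
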